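/- Let (M,d) be a proper separable metric space, (Xₙ) a sequence of i.i.d. M-valued random variables with law μ ∈ P₁(M), and for each n let mₙ be a Fréchet median of the empirical measure μₙ = (1/n) Σ_{k=1}^n δ_{X_k}. If μ has a unique Fréchet median m, then mₙ → m almost surely. -/

import Mathlib

open MeasureTheory Metric Filter ENNReal Topology

section Aux
variable {M : Type*} [MetricSpace M]

lemma gn_lipschitz (X : ℕ → M) (n : ℕ) :
    LipschitzWith 1 (fun y => (∑ k ∈ Finset.range n, dist y (X k)) / n) := by
  apply LipschitzWith.of_dist_le_mul
  intro y y'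
  rw [Real.dist_eq, NNReal.coe_one, one_mul]
  rcases Nat.eq_zero_or_pos n with h | h
  · simp [h, dist_nonneg]
  · rw [div_sub_div_same, abs_div, abs_of_nonneg (Nat.cast_nonneg n : (0:ℝ) ≤ n),
      div_le_iff₀ (by exact_mod_cast h : (0:ℝ) < n)]
    calc |∑ k ∈ Finset.range n, dist y (X k) - ∑ k ∈ Finset.range n, dist y' (X k)|
        = |∑ k ∈ Finset.range n, (dist y (X k) - dist y' (X k))| := by
          rw [Finset.sum_sub_distrib]
      _ ≤ ∑ k ∈ Finset.range n, |dist y (X k) - dist y' (X k)| :=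
          Finset.abs_sum_le_sum_abs _ _
      _ ≤ ∑ k ∈ Finset.range n, dist y y' :=
          Finset.sum_le_sum fun k _ => abs_dist_sub_le _ _ _
      _ = dist y y' * n := by rw [Finset.sum_const, Finset.card_range, nsmul_eq_mul]; ring

lemma gn_coer (X : ℕ → M) (n : ℕ) (hn : 0 < n) (y m : M) :
    dist y m ≤ (∑ k ∈ Finset.range n, dist y (X k)) / n
      + (∑ k ∈ Finset.range n, dist m (X k)) / n := by
  rw [← add_div, le_div_iff₀ (by exact_mod_cast hn : (0:ℝ) < n)]
  calc dist y m * n = ∑ _k ∈ Finset.range n, dist y m := by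
        rw [Finset.sum_const, Finset.card_range, nsmul_eq_mul]; ring
    _ ≤ ∑ k ∈ Finset.range n, (dist y (X k) + dist m (X k)) :=
        Finset.sum_le_sum fun k _ => by
          rw [dist_comm m (X k)]; exact dist_triangle y (X k) m
    _ = _ := Finset.sum_add_distrib

/-- The deterministic argmin-convergence lemma: if 1-Lipschitz functions `g n`
converge pointwise on a dense set (plus `m`) to a 1-Lipschitz function `f` with a
unique minimizer `m`, and `z n` minimizes `g n`, with a coercivity bound, then
`z n → m`. -/
lemma argmin_tendsto [ProperSpace M]
    (f : M → ℝ) (g : ℕ → M → ℝ) (D : Set M) (hD : Dense D) (m : M)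
    (hf : LipschitzWith 1 f) (hg : ∀ n, LipschitzWith 1 (g n))
    (hconv : ∀ y ∈ insert m D, Tendsto (fun n => g n y) atTop (𝓝 (f y)))
    (hmin : ∀ x, f m ≤ f x) (huniq : ∀ x, (∀ y, f x ≤ f y) → x = m)
    (z : ℕ → M) (hz : ∀ n y, g n (z n) ≤ g n y)
    (hcoer : ∀ n y, dist y m ≤ g n y + g n m) :
    Tendsto z atTop (𝓝 m) := by
  rw [Metric.tendsto_nhds]
  intro ε hε
  have hgm : Tendsto (fun n => g n m) atTop (𝓝 (f m)) := hconv m (Set.mem_insert _ _)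
  set R : ℝ := 2 * f m + 2 with hR
  have hball : ∀ᶠ n in atTop, dist (z n) m ≤ R := by
    filter_upwards [hgm (gt_mem_nhds (lt_add_one (f m)))] with n hn
    have h1 : dist (z n) m ≤ g n (z n) + g n m := hcoer n (z n)
    have h2 : g n (z n) ≤ g n m := hz n m
    simp only [Set.mem_preimage, Set.mem_setOf_eq] at hn
    linarith
  set K : Set M := closedBall m R \ ball m ε with hK
  rcases Set.eq_empty_or_nonempty K with hKe | hKne
  · filter_upwards [hball] with n hn
    by_contra hcon
    push_neg at hcon
    exact Set.eq_empty_iff_forall_notMem.1 hKe (z n)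
      ⟨mem_closedBall.2 hn, fun h => absurd (mem_ball.1 h) (not_lt.2 hcon)⟩
  · have hKc : IsCompact K := (isCompact_closedBall m R).diff isOpen_ball
    obtain ⟨x₁, hx₁K, hx₁min⟩ := hKc.exists_isMinOn hKne hf.continuous.continuousOn
    have hx₁m : f m < f x₁ := by
      have hne : x₁ ≠ m := fun h => hx₁K.2 (h ▸ mem_ball_self hε)
      refine lt_of_le_of_ne (hmin x₁) fun h => hne (huniq x₁ fun y => h ▸ hmin y)
    set δ : ℝ := (f x₁ - f m) / 3 with hδdef
    have hδ : 0 < δ := by simp only [hδdef]; linarith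
    have hcover : K ⊆ ⋃ d : D, ball (d : M) (δ / 3) := by
      intro x _
      obtain ⟨d, hdD, hd⟩ := hD.exists_dist_lt x (by positivity : (0:ℝ) < δ / 3)
      exact Set.mem_iUnion.2 ⟨⟨d, hdD⟩, mem_ball.2 hd⟩
    obtain ⟨t, ht⟩ := hKc.elim_finite_subcover (fun d : D => ball (d : M) (δ / 3))
      (fun d => isOpen_ball) hcover
    have happrox : ∀ᶠ n in atTop, ∀ d ∈ t, |g n (d : M) - f (d : M)| < δ / 3 := by
      rw [eventually_all_finset]
      intro d _
      have h := Metric.tendsto_nhds.1 (hconv d (Set.mem_insert_of_mem _ d.2)) (δ / 3)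
        (by positivity)
      simpa [Real.dist_eq] using h
    have hgm2 : ∀ᶠ n in atTop, g n m < f m + δ := hgm (gt_mem_nhds (by linarith))
    filter_upwards [hball, happrox, hgm2] with n h1 h2 h3
    by_contra hcon
    push_neg at hcon
    have hzK : z n ∈ K := ⟨mem_closedBall.2 h1, fun h => absurd (mem_ball.1 h) (not_lt.2 hcon)⟩
    obtain ⟨d, hdt, hdb⟩ := Set.mem_iUnion₂.1 (ht hzK)
    have hd1 : dist (z n) (d : M) < δ / 3 := mem_ball.1 hdb
    have lg : |g n (z n) - g n (d : M)| ≤ dist (z n) (d : M) := by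
      simpa [Real.dist_eq] using (hg n).dist_le_mul (z n) d
    have lf : |f (z n) - f (d : M)| ≤ dist (z n) (d : M) := by
      simpa [Real.dist_eq] using hf.dist_le_mul (z n) d
    have h4 : |g n (d : M) - f (d : M)| < δ / 3 := h2 d hdt
    have h5 : f x₁ ≤ f (z n) := hx₁min hzK
    have h6 : g n (z n) ≤ g n m := hz n m
    rw [abs_sub_lt_iff] at h4
    rw [abs_sub_le_iff] at lg lf
    have : f x₁ = f m + 3 * δ := by simp only [hδdef]; ring
    linarith [lg.1, lg.2, lf.1, lf.2, h4.1, h4.2]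

end Aux

lemma my_integrable_dirac {α : Type*} [MeasurableSpace α] [MeasurableSingletonClass α]
    {f : α → ℝ} (hf : Measurable f) (a : α) : Integrable f (Measure.dirac a) :=
  ⟨hf.aestronglyMeasurable, by simp [HasFiniteIntegral, lintegral_dirac]⟩

lemma empirical_eq {M : Type*} [MetricSpace M] [MeasurableSpace M] [BorelSpace M]
    (X : ℕ → M) (n : ℕ) (y : M) :
    (∫ p, dist y p ∂((n : ℝ≥0∞)⁻¹ • ∑ k ∈ Finset.range n, Measure.dirac (X k))) =
      (∑ k ∈ Finset.range n, dist y (X k)) / n := by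
  rw [integral_smul_measure, integral_finset_sum_measure]
  · simp [integral_dirac, ENNReal.toReal_inv, div_eq_inv_mul]
  · intro k _
    exact my_integrable_dirac (continuous_const.dist continuous_id).measurable _

/-- Strong consistency of empirical Fréchet medians: if `(Xₙ)` are
i.i.d. with law `μ ∈ P₁(M)` on a proper separable metric space, `mₙ` is a Fréchet
median of the empirical measure `μₙ = (1/n) ∑_{k<n} δ_{X_k}`, and `μ` has a unique
Fréchet median `m`, then `mₙ → m` almost surely. -/
theorem empirical_frechet_medians_converge_as
    {M : Type*} [MetricSpace M] [ProperSpace M] [TopologicalSpace.SeparableSpace M]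
    [MeasurableSpace M] [BorelSpace M]
    {Ω : Type*} [MeasurableSpace Ω] (P : Measure Ω) [IsProbabilityMeasure P]
    (X : ℕ → Ω → M) (hmeas : ∀ n, Measurable (X n))
    (hindep : ProbabilityTheory.iIndepFun X P)
    (μ : Measure M) [IsProbabilityMeasure μ]
    (hlaw : ∀ n, P.map (X n) = μ)
    (x₀ : M) (hmom : Integrable (fun p => dist x₀ p) μ)
    (m : M) (hmed : ∀ y : M, (∫ p, dist m p ∂μ) ≤ ∫ p, dist y p ∂μ)
    (huniq : ∀ x : M, (∀ y : M, (∫ p, dist x p ∂μ) ≤ ∫ p, dist y p ∂μ) → x = m)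
    (mn : ℕ → Ω → M)
    (hmn : ∀ n : ℕ, ∀ ω : Ω, ∀ y : M,
      (∫ p, dist (mn n ω) p
          ∂((n : ℝ≥0∞)⁻¹ • ∑ k ∈ Finset.range n, Measure.dirac (X k ω))) ≤
        ∫ p, dist y p
          ∂((n : ℝ≥0∞)⁻¹ • ∑ k ∈ Finset.range n, Measure.dirac (X k ω))) :
    ∀ᵐ ω ∂P, Tendsto (fun n => mn n ω) atTop (nhds m) := by
  classical
  set f : M → ℝ := fun y => ∫ p, dist y p ∂μ with hfdef
  have hdm : ∀ y : M, Measurable (fun p : M => dist y p) := fun y =>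
    (continuous_const.dist continuous_id).measurable
  have hint : ∀ y : M, Integrable (fun p => dist y p) μ := by
    intro y
    refine ((integrable_const (dist y x₀)).add hmom).mono'
      (hdm y).aestronglyMeasurable (ae_of_all _ fun p => ?_)
    rw [Real.norm_eq_abs, abs_of_nonneg dist_nonneg]
    exact dist_triangle y x₀ p
  -- `f` is 1-Lipschitz
  have hfLip : LipschitzWith 1 f := by
    apply LipschitzWith.of_dist_le_mul
    intro y y'
    rw [Real.dist_eq, NNReal.coe_one, one_mul]
    have h1 : f y - f y' = ∫ p, (dist y p - dist y' p) ∂μ :=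
      (integral_sub (hint y) (hint y')).symm
    rw [h1]
    calc |∫ p, (dist y p - dist y' p) ∂μ| ≤ ∫ p, |dist y p - dist y' p| ∂μ :=
          by
          simpa [Real.norm_eq_abs] using
            norm_integral_le_integral_norm fun p => dist y p - dist y' p
      _ ≤ ∫ _p, dist y y' ∂μ := by
          refine integral_mono ((hint y).sub (hint y')).abs (integrable_const _) ?_
          exact fun p => abs_dist_sub_le _ _ _
      _ = dist y y' := by simp
  -- strong law of large numbers for each fixed `y`
  have slln : ∀ y : M, ∀ᵐ ω ∂P,
      Tendsto (fun n : ℕ => (∑ k ∈ Finset.range n, dist y (X k ω)) / n) atTop (𝓝 (f y)) := by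
    intro y
    have hint0 : Integrable (fun ω => dist y (X 0 ω)) P := by
      have h := hint y
      rw [← hlaw 0] at h
      exact (integrable_map_measure (hdm y).aestronglyMeasurable (hmeas 0).aemeasurable).mp h
    have hident : ∀ i, ProbabilityTheory.IdentDistrib (fun ω => dist y (X i ω))
        (fun ω => dist y (X 0 ω)) P P := fun i =>
      ProbabilityTheory.IdentDistrib.comp
        ⟨(hmeas i).aemeasurable, (hmeas 0).aemeasurable, by rw [hlaw, hlaw]⟩ (hdm y)
    have hind : Pairwise (Function.onFun (ProbabilityTheory.IndepFun · · P) fun i ω => dist y (X i ω)) :=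
      fun i j hij => (hindep.indepFun hij).comp (hdm y) (hdm y)
    have h := ProbabilityTheory.strong_law_ae_real _ hint0 hind hident
    have heq : (∫ ω, dist y (X 0 ω) ∂P) = f y := by
      simp only [hfdef, ← hlaw 0]
      exact (integral_map (hmeas 0).aemeasurable (hdm y).aestronglyMeasurable).symm
    rwa [heq] at h
  -- countable dense set
  obtain ⟨D₀, hD₀c, hD₀d⟩ := TopologicalSpace.exists_countable_dense M
  have hDc : (insert m D₀ : Set M).Countable := hD₀c.insert m
  have hae : ∀ᵐ ω ∂P, ∀ y ∈ insert m D₀,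
      Tendsto (fun n : ℕ => (∑ k ∈ Finset.range n, dist y (X k ω)) / n) atTop (𝓝 (f y)) :=
    (ae_ball_iff hDc).2 fun y _ => slln y
  filter_upwards [hae] with ω hω
  -- apply the deterministic lemma to the shifted sequence
  have key : Tendsto (fun n => mn (n + 1) ω) atTop (𝓝 m) := by
    refine argmin_tendsto f
      (fun n y => (∑ k ∈ Finset.range (n + 1), dist y (X k ω)) / (n + 1 : ℕ))
      D₀ hD₀d m hfLip (fun n => gn_lipschitz (fun k => X k ω) (n + 1))
      (fun y hy => ?_) hmed huniq (fun n => mn (n + 1) ω) (fun n y => ?_) (fun n y => ?_)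
    · exact (tendsto_add_atTop_iff_nat 1).2 (hω y hy)
    · have h := hmn (n + 1) ω y
      rwa [empirical_eq (fun k => X k ω), empirical_eq (fun k => X k ω)] at h
    · exact gn_coer (fun k => X k ω) (n + 1) n.succ_pos y m
  exact (tendsto_add_atTop_iff_nat 1).1 key
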